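/- If D is a connected two-way dominating set in a connected graph G, then rc(G) ≤ rc(G[D]) + 3. -/

import Mathlib

open SimpleGraph

/-- A graph `G` is rainbow connected under edge-coloring `c` if any two vertices are
joined by a path whose edges receive pairwise distinct colors. -/
def RainbowConnected {V : Type*} (G : SimpleGraph V) (c : Sym2 V → ℕ) : Prop :=
  ∀ u v : V, ∃ p : G.Walk u v, p.IsPath ∧ (p.edges.map c).Nodup

/-- The rainbow connection number: the least number of colors in an edge-coloring
making `G` rainbow connected. -/
noncomputable def rc {V : Type*} [Fintype V] (G : SimpleGraph V) : ℕ :=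
  sInf {n | ∃ c : Sym2 V → ℕ, (∀ e ∈ G.edgeSet, c e < n) ∧ RainbowConnected G c}

/-- Least `n` with `n ^ s ≥ t`, i.e. `⌈t^(1/s)⌉`. -/
noncomputable def ceilRoot (s t : ℕ) : ℕ := sInf {n | t ≤ n ^ s}

lemma bypass_edges_sublist {V : Type*} [DecidableEq V] {G : SimpleGraph V} {u v : V}
    (p : G.Walk u v) : p.bypass.edges.Sublist p.edges := by
  induction p with
  | nil => simp [Walk.bypass]
  | cons ha p ih =>
    simp only [Walk.bypass]
    split_ifs with hs
    · refine ((?_ : (p.bypass.dropUntil _ hs).edges.Sublist p.bypass.edges).trans ih).trans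
        (List.sublist_cons_self _ _)
      conv_rhs => rw [← Walk.take_spec p.bypass hs]
      rw [Walk.edges_append]
      exact List.sublist_append_right _ _
    · exact ih.cons₂ _

lemma exists_rainbow_path_of_walk {V : Type*} [DecidableEq V] {G : SimpleGraph V} {u v : V}
    (c : Sym2 V → ℕ) (p : G.Walk u v) (h : (p.edges.map c).Nodup) :
    ∃ q : G.Walk u v, q.IsPath ∧ (q.edges.map c).Nodup :=
  ⟨p.bypass, p.bypass_isPath, h.sublist ((bypass_edges_sublist p).map c)⟩

lemma exists_adj_parity {W : Type*} {H : SimpleGraph W} {v r : W}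
    (hr : H.Reachable v r) (hw : ∃ w, H.Adj v w) :
    ∃ w, H.Adj v w ∧ H.Reachable w r ∧ H.dist w r % 2 ≠ H.dist v r % 2 := by
  rcases Nat.eq_zero_or_pos (H.dist v r) with h0 | hpos
  · have hvr : v = r := (hr.dist_eq_zero_iff).mp h0
    obtain ⟨w, hw⟩ := hw
    have hwr : H.Reachable w r := hvr ▸ hw.symm.reachable
    have h1 : H.dist w r = 1 := by
      have hle : H.dist w r ≤ 1 := by
        exact SimpleGraph.dist_le (Walk.cons (hvr ▸ hw.symm : H.Adj w r) Walk.nil)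
      have hne : H.dist w r ≠ 0 := by
        intro h
        exact hw.ne' (hvr ▸ (hwr.dist_eq_zero_iff).mp h)
      omega
    exact ⟨w, hw, hwr, by omega⟩
  · obtain ⟨p, hp⟩ := hr.exists_walk_length_eq_dist
    cases p with
    | nil => simp at hp; simp at hpos
    | @cons _ w _ ha q =>
      have hql : q.length = H.dist v r - 1 := by simp at hp; omega
      have hwr : H.Reachable w r := q.reachable
      have hle : H.dist w r ≤ H.dist v r - 1 := hql ▸ SimpleGraph.dist_le q
      have hge : H.dist v r ≤ H.dist w r + 1 := by
        obtain ⟨q', hq'⟩ := hwr.exists_walk_length_eq_dist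
        simpa [hq'] using SimpleGraph.dist_le (Walk.cons ha q')
      have : H.dist w r = H.dist v r - 1 := by omega
      exact ⟨w, ha, hwr, by omega⟩

lemma exists_sel {W : Type*} (H : SimpleGraph W) :
    ∃ sel : W → Bool, ∀ v, (∃ w, H.Adj v w) → ∃ w, H.Adj v w ∧ sel w ≠ sel v := by
  classical
  refine ⟨fun v => decide (H.dist v (Quot.out (H.connectedComponentMk v)) % 2 = 1), ?_⟩
  intro v hw
  have hreach : H.Reachable v (Quot.out (H.connectedComponentMk v)) :=
    (SimpleGraph.ConnectedComponent.eq.mp (Quot.out_eq (H.connectedComponentMk v))).symm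
  obtain ⟨w, hadj, hwr, hpar⟩ := exists_adj_parity hreach hw
  refine ⟨w, hadj, ?_⟩
  have hcomp : H.connectedComponentMk w = H.connectedComponentMk v :=
    SimpleGraph.ConnectedComponent.eq.mpr hadj.symm.reachable
  simp only [ne_eq, decide_eq_decide, hcomp]
  omega

lemma nodup_mix {k : ℕ} {LD Lu Lv : List ℕ} (hLD : ∀ n ∈ LD, n < k) (hndD : LD.Nodup)
    (hu : Lu.Nodup) (hv : Lv.Nodup) (huk : ∀ n ∈ Lu, k ≤ n) (hvk : ∀ n ∈ Lv, k ≤ n)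
    (huv : ∀ n ∈ Lu, n ∉ Lv) : (Lu ++ (LD ++ Lv)).Nodup := by
  rw [List.nodup_append, List.nodup_append]
  refine ⟨hu, ⟨hndD, hv, ?_⟩, ?_⟩
  · intro a ha b ha' hab; subst hab
    exact absurd (hvk a ha') (by simpa using hLD a ha)
  · intro a ha b ha' hab; subst hab
    rcases List.mem_append.mp ha' with h | h
    · exact absurd (huk a ha) (by simpa using hLD a h)
    · exact huv a ha h


/-- connected two-way dominating set D gives rc(G) ≤ rc(G[D]) + 3. -/
theorem rc_le_rc_induce_twoWayDominating {V : Type*} [Fintype V] [DecidableEq V]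
    (G : SimpleGraph V) [DecidableRel G.Adj] (hG : G.Connected) (D : Finset V)
    (hdom : ∀ v ∉ D, ∃ u ∈ D, G.Adj u v)
    (hpendant : ∀ v : V, G.degree v = 1 → v ∈ D)
    (hDconn : (G.induce (D : Set V)).Connected) :
    rc G ≤ rc (G.induce (D : Set V)) + 3 := by
  classical
  set DS : Set V := (D : Set V) with hDS
  set k : ℕ := rc (G.induce DS) with hk
  -- optimal coloring of the induced graph
  have hne : {n | ∃ c : Sym2 DS → ℕ, (∀ e ∈ (G.induce DS).edgeSet, c e < n) ∧
      RainbowConnected (G.induce DS) c}.Nonempty := by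
    refine ⟨Fintype.card (Sym2 DS), fun e => (Fintype.equivFin (Sym2 DS) e : ℕ), fun e _ => ?_, ?_⟩
    · exact (Fintype.equivFin (Sym2 DS) e).2
    · intro u v
      obtain ⟨p⟩ := hDconn.preconnected u v
      exact ⟨p.bypass, p.bypass_isPath, (p.bypass_isPath.edges_nodup).map
        (fun a b hab => (Fintype.equivFin (Sym2 DS)).injective (Fin.ext (by exact_mod_cast hab)))⟩
  obtain ⟨c₀, hc₀lt, hc₀rb⟩ := Nat.sInf_mem hne
  -- the dominating neighbor
  have hf : ∀ v, v ∉ D → ∃ u, u ∈ D ∧ G.Adj u v := by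
    intro v hv; obtain ⟨u, hu, hadj⟩ := hdom v hv; exact ⟨u, hu, hadj⟩
  let f : V → V := fun v => if h : v ∉ D then Classical.choose (hf v h) else v
  have hfD : ∀ v (hv : v ∉ D), f v ∈ D ∧ G.Adj (f v) v := by
    intro v hv
    simp only [f, dif_pos hv]
    exact Classical.choose_spec (hf v hv)
  -- the parity 2-coloring of the outside
  obtain ⟨sel₀, hsel₀⟩ := exists_sel (G.induce {v : V | v ∉ D})
  let sel : V → Bool := fun v => if h : v ∉ D then sel₀ ⟨v, h⟩ else false
  have hsel : ∀ v (hv : v ∉ D) (w0) (hw0 : w0 ∉ D), G.Adj v w0 →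
      ∃ w, w ∉ D ∧ G.Adj v w ∧ sel w ≠ sel v := by
    intro v hv w0 hw0 hadj
    obtain ⟨w, hadj', hne'⟩ := hsel₀ ⟨v, hv⟩ ⟨⟨w0, hw0⟩, by simpa using hadj⟩
    refine ⟨w, w.2, by simpa using hadj', ?_⟩
    have h1 : sel (w : V) = sel₀ w := by
      simp only [sel, dif_pos (show (w : V) ∉ D from w.2), Subtype.coe_eta]
    have h2 : sel v = sel₀ ⟨v, hv⟩ := by simp only [sel, dif_pos hv]
    rw [h1, h2]; exact hne'
  let dir : V → ℕ := fun v => if sel v then k else k + 1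
  let oth : V → ℕ := fun v => if sel v then k + 1 else k
  have hdo : ∀ v, (k ≤ dir v ∧ dir v ≤ k + 1) ∧ (k ≤ oth v ∧ oth v ≤ k + 1) ∧ dir v ≠ oth v := by
    intro v; simp only [dir, oth]; split_ifs <;> omega
  let cross : V → V → ℕ := fun v d => if d = f v then dir v else oth v
  -- the coloring
  let g : V → V → ℕ := fun u v =>
    if hu : u ∈ D then
      (if hv : v ∈ D then c₀ s(⟨u, hu⟩, ⟨v, hv⟩) else cross v u)
    else (if v ∈ D then cross u v else k + 2)
  have hgsymm : ∀ u v, g u v = g v u := by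
    intro u v
    by_cases hu : u ∈ D <;> by_cases hv : v ∈ D <;>
      simp only [g, dif_pos, dif_neg, hu, hv, if_pos, if_neg, not_false_iff]
    rw [Sym2.eq_swap]
  let c' : Sym2 V → ℕ := Sym2.lift ⟨g, hgsymm⟩
  have hDD : ∀ u v (hu : u ∈ D) (hv : v ∈ D), c' s(u, v) = c₀ s(⟨u, hu⟩, ⟨v, hv⟩) := by
    intro u v hu hv; simp only [c', Sym2.lift_mk, g, dif_pos hu, dif_pos hv]
  have hXD : ∀ u v, u ∉ D → v ∈ D → c' s(u, v) = cross u v := by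
    intro u v hu hv; simp only [c', Sym2.lift_mk, g, dif_neg hu, if_pos hv]
  have hOO : ∀ u v, u ∉ D → v ∉ D → c' s(u, v) = k + 2 := by
    intro u v hu hv; simp only [c', Sym2.lift_mk, g, dif_neg hu, if_neg hv]
  -- D-internal rainbow walks
  have hD : ∀ (x y : V) (hx : x ∈ D) (hy : y ∈ D), ∃ p : G.Walk x y,
      (∀ n ∈ p.edges.map c', n < k) ∧ (p.edges.map c').Nodup := by
    intro x y hx hy
    obtain ⟨q, hqp, hqn⟩ := hc₀rb ⟨x, hx⟩ ⟨y, hy⟩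
    let emb : G.induce DS ↪g G := Embedding.induce DS
    refine ⟨q.map emb.toHom, ?_, ?_⟩
    all_goals {
      have hmap : ((q.map emb.toHom).edges.map c') = q.edges.map c₀ := by
        rw [Walk.edges_map, List.map_map]
        refine List.map_congr_left ?_
        intro e he
        have heS := q.edges_subset_edgeSet he
        revert heS
        refine Sym2.ind (fun a b => ?_) e
        intro hab
        have : (c' ∘ Sym2.map emb.toHom) s(a, b) = c' s((a : V), (b : V)) := rfl
        rw [this, hDD a b a.2 b.2]
      erw [hmap]
      first
      | · intro n hn
          obtain ⟨e, he, rfl⟩ := List.mem_map.mp hn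
          exact hc₀lt e (q.edges_subset_edgeSet he)
      | exact hqn
    }
  -- gadget 1 : the direct edge
  have hg1 : ∀ v, v ∉ D → ∃ p : G.Walk (f v) v, p.edges.map c' = [dir v] := by
    intro v hv
    refine ⟨Walk.cons (hfD v hv).2 Walk.nil, ?_⟩
    simp only [Walk.edges_cons, Walk.edges_nil, List.map_cons, List.map_nil]
    rw [show (s(f v, v) : Sym2 V) = s(v, f v) from Sym2.eq_swap,
      hXD v (f v) hv (hfD v hv).1]
    simp [cross]
  -- gadget 2 : the alternative entry
  have hg2 : ∀ v, v ∉ D → ∃ d, d ∈ D ∧ ∃ p : G.Walk d v,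
      p.edges.map c' = [oth v] ∨ p.edges.map c' = [oth v, k + 2] := by
    intro v hv
    have hdeg : 1 < G.degree v := by
      have h1 : 0 < G.degree v :=
        (SimpleGraph.degree_pos_iff_exists_adj G v).mpr ⟨f v, (hfD v hv).2.symm⟩
      have h2 : G.degree v ≠ 1 := fun h => hv (hpendant v h)
      omega
    obtain ⟨b, hb, hbne⟩ := Finset.exists_mem_ne (by rwa [G.card_neighborFinset_eq_degree]) (f v)
    have hvb : G.Adj v b := by simpa using hb
    by_cases hbD : b ∈ D
    · refine ⟨b, hbD, Walk.cons hvb.symm Walk.nil, Or.inl ?_⟩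
      simp only [Walk.edges_cons, Walk.edges_nil, List.map_cons, List.map_nil]
      rw [show (s(b, v) : Sym2 V) = s(v, b) from Sym2.eq_swap, hXD v b hv hbD]
      simp [cross, hbne]
    · obtain ⟨w, hwD, hvw, hselw⟩ := hsel v hv b hbD hvb
      refine ⟨f w, (hfD w hwD).1,
        Walk.cons (hfD w hwD).2 (Walk.cons hvw.symm Walk.nil), Or.inr ?_⟩
      simp only [Walk.edges_cons, Walk.edges_nil, List.map_cons, List.map_nil]
      have e1 : c' s(f w, w) = oth v := by
        rw [show (s(f w, w) : Sym2 V) = s(w, f w) from Sym2.eq_swap,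
          hXD w (f w) hwD (hfD w hwD).1]
        simp only [cross, if_pos rfl, dir, oth]
        cases hsv : sel v <;> cases hsw : sel w <;> simp_all
      have e2 : c' s(w, v) = k + 2 := hOO w v hwD hv
      rw [e1, e2]
  -- main walk construction
  have hsing : ∀ x : V, ([dir x] : List ℕ).Nodup := by simp
  have hdirk : ∀ x : V, ∀ n ∈ ([dir x] : List ℕ), k ≤ n := by
    intro x n hn; simp at hn; subst hn; exact ((hdo x).1).1
  have key : ∀ u v : V, ∃ p : G.Walk u v, (p.edges.map c').Nodup := by
    intro u v
    by_cases hu : u ∈ D <;> by_cases hv : v ∈ D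
    · obtain ⟨p, _, hn⟩ := hD u v hu hv; exact ⟨p, hn⟩
    · obtain ⟨p, hplt, hpn⟩ := hD u (f v) hu (hfD v hv).1
      obtain ⟨q, hq⟩ := hg1 v hv
      refine ⟨p.append q, ?_⟩
      rw [Walk.edges_append, List.map_append, hq]
      have := nodup_mix (k := k) (Lu := ([] : List ℕ)) hplt hpn List.nodup_nil
        (hsing v) (by simp) (hdirk v) (by simp)
      simpa using this
    · obtain ⟨q, hq⟩ := hg1 u hu
      obtain ⟨p, hplt, hpn⟩ := hD (f u) v (hfD u hu).1 hv
      refine ⟨q.reverse.append p, ?_⟩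
      rw [Walk.edges_append, Walk.edges_reverse, List.map_append, List.map_reverse, hq]
      have := nodup_mix (k := k) (Lv := ([] : List ℕ)) hplt hpn (hsing u)
        List.nodup_nil (hdirk u) (by simp) (by simp)
      simpa using this
    · by_cases hsv : sel u = sel v
      · obtain ⟨q, hq⟩ := hg1 u hu
        obtain ⟨d, hdD, r, hr⟩ := hg2 v hv
        obtain ⟨p, hplt, hpn⟩ := hD (f u) d (hfD u hu).1 hdD
        refine ⟨q.reverse.append (p.append r), ?_⟩
        rw [Walk.edges_append, Walk.edges_append, Walk.edges_reverse, List.map_append,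
          List.map_append, List.map_reverse, hq]
        have hdune : dir u ≠ oth v := by
          simp only [dir, oth]; rw [hsv]
          cases h2 : sel v <;> simp <;> omega
        have hdu2 : dir u ≠ k + 2 := by have := (hdo u).1.2; omega
        have hothk : k ≤ oth v := ((hdo v).2.1).1
        have hoth2 : oth v ≤ k + 1 := ((hdo v).2.1).2
        rcases hr with hr | hr <;> rw [hr]
        · have h5 : ∀ n ∈ ([oth v] : List ℕ), k ≤ n := by
            intro n hn; simp at hn; subst hn; exact hothk
          have h6 : ∀ n ∈ ([dir u] : List ℕ), n ∉ ([oth v] : List ℕ) := by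
            intro n hn; simp at hn; subst hn; simpa using hdune
          have := nodup_mix (k := k) hplt hpn (hsing u) (by simp) (hdirk u) h5 h6
          simpa using this
        · have h4 : ([oth v, k + 2] : List ℕ).Nodup := by simp; omega
          have h5 : ∀ n ∈ ([oth v, k + 2] : List ℕ), k ≤ n := by
            intro n hn; simp at hn; rcases hn with h | h <;> omega
          have h6 : ∀ n ∈ ([dir u] : List ℕ), n ∉ ([oth v, k + 2] : List ℕ) := by
            intro n hn; simp at hn; subst hn; simp; exact ⟨hdune, hdu2⟩
          have := nodup_mix (k := k) hplt hpn (hsing u) h4 (hdirk u) h5 h6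
          simpa using this
      · obtain ⟨q, hq⟩ := hg1 u hu
        obtain ⟨r, hrq⟩ := hg1 v hv
        obtain ⟨p, hplt, hpn⟩ := hD (f u) (f v) (hfD u hu).1 (hfD v hv).1
        refine ⟨q.reverse.append (p.append r), ?_⟩
        rw [Walk.edges_append, Walk.edges_append, Walk.edges_reverse, List.map_append,
          List.map_append, List.map_reverse, hq, hrq]
        have hdd : dir u ≠ dir v := by
          simp only [dir]
          split_ifs with h1 h2 h2
          · exact absurd (h1.trans h2.symm) hsv
          · omega
          · omega
          · simp only [Bool.not_eq_true] at h1 h2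
            exact absurd (h1.trans h2.symm) hsv
        have h6 : ∀ n ∈ ([dir u] : List ℕ), n ∉ ([dir v] : List ℕ) := by
          intro n hn; simp at hn; subst hn; simpa using hdd
        have := nodup_mix (k := k) hplt hpn (hsing u) (hsing v) (hdirk u) (hdirk v) h6
        simpa using this
  -- conclusion
  refine Nat.sInf_le ⟨c', ?_, ?_⟩
  · intro e
    refine Sym2.ind (fun a b => ?_) e
    intro hab
    rw [SimpleGraph.mem_edgeSet] at hab
    by_cases ha : a ∈ D <;> by_cases hb : b ∈ D
    · rw [hDD a b ha hb]
      have h2 : c₀ s(⟨a, ha⟩, ⟨b, hb⟩) < k := hc₀lt _ (by simpa using hab)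
      omega
    · rw [show (s(a, b) : Sym2 V) = s(b, a) from Sym2.eq_swap, hXD b a hb ha]
      simp only [cross, dir, oth]
      split_ifs <;> omega
    · rw [hXD a b ha hb]
      simp only [cross, dir, oth]
      split_ifs <;> omega
    · rw [hOO a b ha hb]; omega
  · intro u v
    obtain ⟨p, hn⟩ := key u v
    exact exists_rainbow_path_of_walk c' p hn
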